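/- Let p ∈ ℝ and let ρ_W(p) be the noisy W state on three qubits. Let H denote the entrywise (Hadamard) square of ρ_W(p), i.e., H(x,y) = ρ_W(p)(x,y)² for all index triples x, y. Then H = (p²/3)·|W⟩⟨W| + ((1−p)²/64)·I₈ + (p(1−p)/12)·(|001⟩⟨001| + |010⟩⟨010| + |100⟩⟨100|), and tr(H) = (5p² + 3)/24. Consequently the distilled noisy W state ρ'_W(p) := H/tr(H) equals (8p²/(5p²+3))·|W⟩⟨W| + (3(1−p)²/(8(5p²+3)))·I₈ + (2p(1−p)/(5p²+3))·(|001⟩⟨001| + |010⟩⟨010| + |100⟩⟨100|). -/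

import Mathlib

open Matrix BigOperators

noncomputable section

/-- The rank-one matrix `x x†`. -/
def rankOne {n : Type*} (x : n → ℂ) : Matrix n n ℂ :=
  Matrix.of fun i j => x i * (starRingEnd ℂ) (x j)

/-- The W vector `(|001⟩ + |010⟩ + |100⟩)/√3`. -/
def Wvec : (Fin 2 × Fin 2 × Fin 2) → ℂ := fun x =>
  ((if x = (0, 0, 1) then 1 else 0) + (if x = (0, 1, 0) then 1 else 0)
    + (if x = (1, 0, 0) then 1 else 0)) / (Real.sqrt 3 : ℂ)

/-- The noisy W state `p |W⟩⟨W| + (1-p)/8 · I₈`. -/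
def rhoW (p : ℝ) :
    Matrix (Fin 2 × Fin 2 × Fin 2) (Fin 2 × Fin 2 × Fin 2) ℂ :=
  (p : ℂ) • rankOne Wvec + (((1 - p) / 8 : ℝ) : ℂ) • 1

/-- The standard basis vector `|ijk⟩` of ℂ⁸. -/
def basis3 (t : Fin 2 × Fin 2 × Fin 2) : (Fin 2 × Fin 2 × Fin 2) → ℂ :=
  fun x => if x = t then 1 else 0

/-- The numerator of the W vector. -/
def rfun (x : Fin 2 × Fin 2 × Fin 2) : ℂ :=
  ((if x = (0, 0, 1) then 1 else 0) + (if x = (0, 1, 0) then 1 else 0)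
    + (if x = (1, 0, 0) then 1 else 0))

lemma hr (x : Fin 2 × Fin 2 × Fin 2) : rfun x * rfun x = rfun x := by
  unfold rfun
  by_cases h1 : x = (0,0,1) <;> by_cases h2 : x = (0,1,0) <;> by_cases h3 : x = (1,0,0) <;>
    simp_all

lemma h3c : (Real.sqrt 3 : ℂ) * (Real.sqrt 3 : ℂ) = 3 := by
  norm_cast
  rw [Real.mul_self_sqrt] <;> norm_num

lemma hWW (x y : Fin 2 × Fin 2 × Fin 2) : Wvec x * Wvec y = rfun x * rfun y / 3 := by
  show rfun x / _ * (rfun y / _) = _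
  rw [div_mul_div_comm, h3c]

lemma hconj (x : Fin 2 × Fin 2 × Fin 2) : (starRingEnd ℂ) (Wvec x) = Wvec x := by
  unfold Wvec
  by_cases h1 : x = (0,0,1) <;> by_cases h2 : x = (0,1,0) <;> by_cases h3 : x = (1,0,0) <;>
    simp_all [map_div₀, Complex.conj_ofReal]

lemma tW : (rankOne Wvec).trace = 1 := by
  simp [Matrix.trace, Matrix.diag, rankOne, Wvec, Fintype.sum_prod_type, Fin.sum_univ_two,
    Prod.ext_iff, Fin.ext_iff, map_div₀, Complex.conj_ofReal, -Fin.val_eq_zero_iff]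
  field_simp
  linear_combination (-1:ℂ) * h3c

lemma tB (t : Fin 2 × Fin 2 × Fin 2) : (rankOne (basis3 t)).trace = 1 := by
  simp [Matrix.trace, Matrix.diag, rankOne, basis3, apply_ite (starRingEnd ℂ)]

/-- The entrywise (Hadamard) square of the noisy W state equals
`(p²/3)|W⟩⟨W| + ((1-p)²/64) I₈ + (p(1-p)/12)(|001⟩⟨001| + |010⟩⟨010| + |100⟩⟨100|)`,
with trace `(5p²+3)/24`; consequently the distilled noisy W state `H / tr H` equals
`(8p²/(5p²+3))|W⟩⟨W| + (3(1-p)²/(8(5p²+3))) I₈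
  + (2p(1-p)/(5p²+3))(|001⟩⟨001| + |010⟩⟨010| + |100⟩⟨100|)`. -/
theorem hadamard_square_noisy_w (p : ℝ)
    (H : Matrix (Fin 2 × Fin 2 × Fin 2) (Fin 2 × Fin 2 × Fin 2) ℂ)
    (hH : H = Matrix.of fun x y => (rhoW p x y) ^ 2) :
    H = ((p ^ 2 / 3 : ℝ) : ℂ) • rankOne Wvec
        + ((((1 - p) ^ 2) / 64 : ℝ) : ℂ) • 1
        + ((p * (1 - p) / 12 : ℝ) : ℂ) •
          (rankOne (basis3 (0, 0, 1)) + rankOne (basis3 (0, 1, 0)) + rankOne (basis3 (1, 0, 0))) ∧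
    H.trace = (((5 * p ^ 2 + 3) / 24 : ℝ) : ℂ) ∧
    (H.trace)⁻¹ • H =
      ((8 * p ^ 2 / (5 * p ^ 2 + 3) : ℝ) : ℂ) • rankOne Wvec
        + ((3 * (1 - p) ^ 2 / (8 * (5 * p ^ 2 + 3)) : ℝ) : ℂ) • 1
        + ((2 * p * (1 - p) / (5 * p ^ 2 + 3) : ℝ) : ℂ) •
          (rankOne (basis3 (0, 0, 1)) + rankOne (basis3 (0, 1, 0)) + rankOne (basis3 (1, 0, 0))) := by
  have h1 : H = ((p ^ 2 / 3 : ℝ) : ℂ) • rankOne Wvec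
      + ((((1 - p) ^ 2) / 64 : ℝ) : ℂ) • 1
      + ((p * (1 - p) / 12 : ℝ) : ℂ) •
        (rankOne (basis3 (0, 0, 1)) + rankOne (basis3 (0, 1, 0)) + rankOne (basis3 (1, 0, 0))) := by
    subst hH
    ext x y
    simp only [rhoW, rankOne, Matrix.of_apply, Matrix.add_apply, Matrix.smul_apply,
      Matrix.one_apply, smul_eq_mul, hconj, basis3]
    simp only [hWW]
    by_cases hxy : x = y
    · subst hxy
      simp only [if_pos rfl]
      have hb : ∀ t : Fin 2 × Fin 2 × Fin 2,
          (if x = t then (1:ℂ) else 0) * (starRingEnd ℂ) (if x = t then (1:ℂ) else 0)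
            = (if x = t then (1:ℂ) else 0) := by
        intro t; by_cases h : x = t <;> simp [h]
      rw [hb, hb, hb]
      have hsum : ((if x = (0,0,1) then (1:ℂ) else 0) + (if x = (0,1,0) then (1:ℂ) else 0)
          + (if x = (1,0,0) then (1:ℂ) else 0)) = rfun x := rfl
      rw [hsum, hr]
      push_cast
      linear_combination ((p:ℂ)^2/9) * hr x
    · simp only [if_neg hxy]
      have hb : ∀ t : Fin 2 × Fin 2 × Fin 2,
          (if x = t then (1:ℂ) else 0) * (starRingEnd ℂ) (if y = t then (1:ℂ) else 0) = 0 := by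
        intro t
        by_cases h : x = t
        · have : y ≠ t := fun h' => hxy (h.trans h'.symm)
          simp [h, this]
        · simp [h]
      rw [hb, hb, hb]
      push_cast
      linear_combination ((p:ℂ)^2/9) * (rfun y * rfun y * hr x + rfun x * hr y)
  have h2 : H.trace = (((5 * p ^ 2 + 3) / 24 : ℝ) : ℂ) := by
    rw [h1]
    simp only [Matrix.trace_add, Matrix.trace_smul, tW, tB, Matrix.trace_one, smul_eq_mul]
    have : (Fintype.card (Fin 2 × Fin 2 × Fin 2) : ℂ) = 8 := by simp
    rw [this]
    push_cast
    ring
  refine ⟨h1, h2, ?_⟩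
  have hne : (5 * p ^ 2 + 3 : ℝ) ≠ 0 := by positivity
  rw [h2, h1]
  rw [smul_add, smul_add, smul_smul, smul_smul, smul_smul]
  congr 2
  · congr 1
    rw [← Complex.ofReal_inv, ← Complex.ofReal_mul, Complex.ofReal_inj]
    field_simp
    ring
  · congr 1
    rw [← Complex.ofReal_inv, ← Complex.ofReal_mul, Complex.ofReal_inj]
    field_simp
    ring
  · congr 1
    rw [← Complex.ofReal_inv, ← Complex.ofReal_mul, Complex.ofReal_inj]
    field_simp
    ring
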